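/- arXiv:2304.09096 — 5 statements merged into one kernel-verified Lean document; each statement's English description precedes it below -/
import Mathlib

section
/- Let X ∈ ℝ^{n_m×n}, Θ ∈ ℝ^{n_u×n}, λ ∈ ℝ, and let V, V' ∈ ℝ^{n_m×n_u} be two rating matrices differing in a single entry: V' = V + w·E_{ij} for some index pair (i,j) and real w with |w| ≤ τ. If every row x_k of X satisfies ‖x_k‖₂ ≤ C, then the Frobenius norm of the difference of the two corresponding gradients with respect to Θ is bounded by τC, i.e., ‖((XΘᵀ − V)ᵀX + λΘ) − ((XΘᵀ − V')ᵀX + λΘ)‖_F = ‖(V' − V)ᵀX‖_F ≤ τC. -/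
open Matrix

attribute [local instance] Matrix.frobeniusNormedAddCommGroup

/-- ℓ₂ sensitivity of the gradient `∇_Θ C = (XΘᵀ − V)ᵀX + λΘ`: if the rating matrices
`V` and `V' = V + w·E_{ij}` differ in a single entry with `|w| ≤ τ`, and every row of `X`
has Euclidean norm at most `C`, then the Frobenius norm of the difference of the two
gradients, which equals `‖(V' − V)ᵀX‖_F`, is at most `τC`. -/
theorem sensitivity_grad_Theta (n_m n_u n : ℕ)
    (X : Matrix (Fin n_m) (Fin n) ℝ) (Θ : Matrix (Fin n_u) (Fin n) ℝ) (lam : ℝ)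
    (V V' : Matrix (Fin n_m) (Fin n_u) ℝ)
    (i : Fin n_m) (j : Fin n_u) (w τ C : ℝ)
    (hV' : V' = V + w • Matrix.single i j (1 : ℝ))
    (hw : |w| ≤ τ)
    (hrows : ∀ k : Fin n_m, Real.sqrt (∑ l, (X k l) ^ 2) ≤ C) :
    ‖((X * Θᵀ - V)ᵀ * X + lam • Θ) - ((X * Θᵀ - V')ᵀ * X + lam • Θ)‖
        = ‖(V' - V)ᵀ * X‖ ∧
      ‖(V' - V)ᵀ * X‖ ≤ τ * C := by
  have h1 : ((X * Θᵀ - V)ᵀ * X + lam • Θ) - ((X * Θᵀ - V')ᵀ * X + lam • Θ)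
      = (V' - V)ᵀ * X := by
    rw [Matrix.transpose_sub, Matrix.transpose_sub, Matrix.transpose_sub,
      Matrix.sub_mul, Matrix.sub_mul, Matrix.sub_mul]
    abel
  refine ⟨by rw [h1], ?_⟩
  -- entrywise description of (V' - V)ᵀ * X
  have hentry : ∀ (a : Fin n_u) (b : Fin n),
      ((V' - V)ᵀ * X) a b = if a = j then w * X i b else 0 := by
    intro a b
    simp only [hV', add_sub_cancel_left, Matrix.mul_apply, Matrix.transpose_apply,
      Matrix.smul_apply, Matrix.single, Matrix.of_apply, smul_eq_mul]
    by_cases ha : a = j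
    · subst ha
      rw [Finset.sum_eq_single i]
      · simp
      · intro k _ hk; simp [Ne.symm hk]
      · simp
    · rw [Finset.sum_eq_zero]
      · simp [ha]
      · intro k _
        simp [Ne.symm ha, ha]
  have hS : ∑ a, ∑ b, ((V' - V)ᵀ * X) a b ^ 2 = w ^ 2 * ∑ b, (X i b) ^ 2 := by
    rw [Finset.sum_eq_single j]
    · rw [Finset.mul_sum]
      exact Finset.sum_congr rfl fun b _ => by rw [hentry j b, if_pos rfl, mul_pow]
    · intro a _ ha
      apply Finset.sum_eq_zero
      intro b _
      rw [hentry a b, if_neg ha]; norm_num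
    · simp
  have hnorm : ‖(V' - V)ᵀ * X‖ = |w| * Real.sqrt (∑ b, (X i b) ^ 2) := by
    rw [Matrix.frobenius_norm_def]
    have : ∀ a b, ‖((V' - V)ᵀ * X) a b‖ ^ (2 : ℝ) = ((V' - V)ᵀ * X) a b ^ 2 := by
      intro a b
      rw [show ((2:ℝ)) = ((2:ℕ):ℝ) by norm_num, Real.rpow_natCast]
      simp [Real.norm_eq_abs, sq_abs]
    simp only [this, hS]
    rw [← Real.sqrt_eq_rpow, Real.sqrt_mul (sq_nonneg w), Real.sqrt_sq_eq_abs]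
  rw [hnorm]
  have hτ : 0 ≤ τ := le_trans (abs_nonneg w) hw
  exact mul_le_mul hw (hrows i) (Real.sqrt_nonneg _) hτ
end

section
/- Let J be a positive natural number, ε_i ∈ (0,1), δ ∈ (0,1), δ_r ∈ (0,1), τ > 0, C > 0, and set σ = (τC/ε_i)·√(2·log(1.25/δ)) and Δ = τC. Then for every α > 1, αJΔ²/(2σ²) + log(1/δ_r)/(α − 1) ≥ Jε_i²/(4·log(1.25/δ)) + 2·√( Jε_i²·log(1/δ_r) / (4·log(1.25/δ)) ), and equality holds at α = 1 + √( 2σ²·log(1/δ_r) / (JΔ²) ). Hence the smallest achievable overall privacy risk is ε_opt = Jε_i²/(4·log(1.25/δ)) + 2·√( Jε_i²·log(1/δ_r) / (4·log(1.25/δ)) ). -/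
open Real

lemma amgm_lb (a b t : ℝ) (ha : 0 < a) (hb : 0 < b) (ht : 0 < t) :
    2 * Real.sqrt (a * b) ≤ t * a + b / t := by
  have h1 : Real.sqrt (t * a) * Real.sqrt (b / t) = Real.sqrt (a * b) := by
    rw [← Real.sqrt_mul (by positivity)]
    congr 1
    field_simp
  nlinarith [sq_nonneg (Real.sqrt (t * a) - Real.sqrt (b / t)),
    Real.sq_sqrt (show (0:ℝ) ≤ t * a by positivity),
    Real.sq_sqrt (show (0:ℝ) ≤ b / t by positivity), h1]

lemma amgm_eq (a b : ℝ) (ha : 0 < a) (hb : 0 < b) :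
    Real.sqrt (b / a) * a + b / Real.sqrt (b / a) = 2 * Real.sqrt (a * b) := by
  have hs : 0 < Real.sqrt (b / a) := Real.sqrt_pos.mpr (by positivity)
  have h1 : Real.sqrt (b / a) * a = Real.sqrt (a * b) := by
    rw [show a * b = (b / a) * a ^ 2 by field_simp, Real.sqrt_mul (by positivity),
      Real.sqrt_sq ha.le]
  have h2 : b / Real.sqrt (b / a) = Real.sqrt (a * b) := by
    rw [div_eq_iff hs.ne', ← Real.sqrt_mul (by positivity),
      show a * b * (b / a) = b ^ 2 by field_simp, Real.sqrt_sq hb.le]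
  linarith

/-- Overall privacy risk of Algorithm 1 via Rényi differential privacy: with
`σ = (τC/ε_i)·√(2 log(1.25/δ))` and sensitivity `Δ = τC`, for every `α > 1` the overall
privacy risk `αJΔ²/(2σ²) + log(1/δ_r)/(α − 1)` is at least
`ε_opt = Jε_i²/(4 log(1.25/δ)) + 2√(Jε_i² log(1/δ_r)/(4 log(1.25/δ)))`,
with equality at `α = 1 + √(2σ² log(1/δ_r)/(JΔ²))`. -/
theorem overall_privacy_risk_opt (J : ℕ) (hJ : 0 < J)
    (εi δ δr τ C : ℝ)
    (hεi : εi ∈ Set.Ioo (0 : ℝ) 1) (hδ : δ ∈ Set.Ioo (0 : ℝ) 1)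
    (hδr : δr ∈ Set.Ioo (0 : ℝ) 1) (hτ : 0 < τ) (hC : 0 < C)
    (σ Δ : ℝ)
    (hσ : σ = (τ * C / εi) * Real.sqrt (2 * Real.log (1.25 / δ)))
    (hΔ : Δ = τ * C) :
    (∀ α : ℝ, 1 < α →
        α * (J : ℝ) * Δ ^ 2 / (2 * σ ^ 2) + Real.log (1 / δr) / (α - 1)
          ≥ (J : ℝ) * εi ^ 2 / (4 * Real.log (1.25 / δ))
            + 2 * Real.sqrt ((J : ℝ) * εi ^ 2 * Real.log (1 / δr)
                / (4 * Real.log (1.25 / δ)))) ∧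
      ((1 + Real.sqrt (2 * σ ^ 2 * Real.log (1 / δr) / ((J : ℝ) * Δ ^ 2)))
            * (J : ℝ) * Δ ^ 2 / (2 * σ ^ 2)
          + Real.log (1 / δr)
            / ((1 + Real.sqrt (2 * σ ^ 2 * Real.log (1 / δr) / ((J : ℝ) * Δ ^ 2))) - 1)
          = (J : ℝ) * εi ^ 2 / (4 * Real.log (1.25 / δ))
            + 2 * Real.sqrt ((J : ℝ) * εi ^ 2 * Real.log (1 / δr)
                / (4 * Real.log (1.25 / δ)))) := by
  obtain ⟨hεi0, hεi1⟩ := hεi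
  obtain ⟨hδ0, hδ1⟩ := hδ
  obtain ⟨hδr0, hδr1⟩ := hδr
  set L := Real.log (1.25 / δ) with hLdef
  set B := Real.log (1 / δr) with hBdef
  have hL : 0 < L := Real.log_pos (by rw [lt_div_iff₀ hδ0]; linarith)
  have hB : 0 < B := Real.log_pos (by rw [lt_div_iff₀ hδr0]; linarith)
  have hJ0 : (0:ℝ) < (J : ℝ) := by exact_mod_cast hJ
  have hσ2 : σ ^ 2 = (τ * C) ^ 2 * (2 * L) / εi ^ 2 := by
    rw [hσ, mul_pow, Real.sq_sqrt (by positivity), div_pow]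
    ring
  set A := (J : ℝ) * εi ^ 2 / (4 * L) with hAdef
  have hA : 0 < A := by positivity
  have hσpos : 0 < σ ^ 2 := by rw [hσ2]; positivity
  have e1 : (J : ℝ) * Δ ^ 2 / (2 * σ ^ 2) = A := by
    rw [hΔ, hσ2, hAdef]
    field_simp
    ring
  have e2 : 2 * σ ^ 2 * B / ((J : ℝ) * Δ ^ 2) = B / A := by
    rw [hΔ, hσ2, hAdef]
    field_simp
    ring
  have e3 : (J : ℝ) * εi ^ 2 * B / (4 * L) = A * B := by
    rw [hAdef]; field_simp
  constructor
  · intro α hα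
    have ht : 0 < α - 1 := by linarith
    have key := amgm_lb A B (α - 1) hA hB ht
    have : α * (J : ℝ) * Δ ^ 2 / (2 * σ ^ 2) = A + (α - 1) * A := by
      rw [show α * (J : ℝ) * Δ ^ 2 / (2 * σ ^ 2)
          = α * ((J : ℝ) * Δ ^ 2 / (2 * σ ^ 2)) by ring, e1]
      ring
    rw [this, e3]
    linarith
  · rw [e2, e3]
    have hs : 0 < Real.sqrt (B / A) := Real.sqrt_pos.mpr (by positivity)
    have : (1 + Real.sqrt (B / A)) * (J : ℝ) * Δ ^ 2 / (2 * σ ^ 2)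
        = A + Real.sqrt (B / A) * A := by
      rw [show (1 + Real.sqrt (B / A)) * (J : ℝ) * Δ ^ 2 / (2 * σ ^ 2)
          = (1 + Real.sqrt (B / A)) * ((J : ℝ) * Δ ^ 2 / (2 * σ ^ 2)) by ring, e1]
      ring
    rw [this, show (1 + Real.sqrt (B / A)) - 1 = Real.sqrt (B / A) by ring]
    have := amgm_eq A B hA hB
    linarith
end

section
/- Let σ > 0, m, m' ∈ ℝ, and α ∈ ℝ, and let p_m(x) = (1/(σ√(2π)))·exp(−(x−m)²/(2σ²)) denote the density of N(m, σ²). Then ∫_ℝ p_m(x)^α · p_{m'}(x)^{1−α} dx = exp( α(α−1)(m−m')² / (2σ²) ). In particular, for α > 1 the Rényi divergence of order α between N(m, σ²) and N(m', σ²), D_α = (1/(α−1))·log ∫ p_m^α p_{m'}^{1−α}, equals α(m−m')²/(2σ²); hence the Gaussian mechanism with ℓ₂ sensitivity 1 and noise N(0, σ²) satisfies (α, α/(2σ²))-Rényi differential privacy. -/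
open Real MeasureTheory

/-- The density of the one-dimensional Gaussian distribution `N(m, σ²)`. -/
noncomputable def gaussPdf (σ m x : ℝ) : ℝ :=
  (1 / (σ * Real.sqrt (2 * Real.pi))) * Real.exp (-(x - m) ^ 2 / (2 * σ ^ 2))

/-- The Gaussian integral with a shifted center. -/
lemma gauss_int (σ μ : ℝ) (hσ : 0 < σ) :
    ∫ x : ℝ, Real.exp (-(x - μ) ^ 2 / (2 * σ ^ 2)) = σ * Real.sqrt (2 * π) := by
  have h : ∀ x : ℝ, Real.exp (-(x - μ) ^ 2 / (2 * σ ^ 2))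
      = (fun y : ℝ => Real.exp (-(1 / (2 * σ ^ 2)) * y ^ 2)) (x - μ) := by
    intro x; ring_nf
  simp only [h]
  rw [MeasureTheory.integral_sub_right_eq_self
      (fun y : ℝ => Real.exp (-(1 / (2 * σ ^ 2)) * y ^ 2)) μ,
    integral_gaussian, div_div_eq_mul_div, div_one,
    show π * (2 * σ ^ 2) = σ ^ 2 * (2 * π) by ring,
    Real.sqrt_mul (by positivity), Real.sqrt_sq hσ.le]

/-- The key integral identity. -/
lemma gauss_renyi_key (σ m m' α : ℝ) (hσ : 0 < σ) :
    (∫ x : ℝ, gaussPdf σ m x ^ α * gaussPdf σ m' x ^ (1 - α))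
      = Real.exp (α * (α - 1) * (m - m') ^ 2 / (2 * σ ^ 2)) := by
  set c : ℝ := 1 / (σ * Real.sqrt (2 * π)) with hc
  have hcpos : 0 < c := by positivity
  set μ := α * m + (1 - α) * m' with hμ
  set K := α * (α - 1) * (m - m') ^ 2 / (2 * σ ^ 2) with hK
  have hpt : ∀ x : ℝ, gaussPdf σ m x ^ α * gaussPdf σ m' x ^ (1 - α)
      = Real.exp K * (c * Real.exp (-(x - μ) ^ 2 / (2 * σ ^ 2))) := by
    intro x
    unfold gaussPdf
    rw [← hc, Real.mul_rpow hcpos.le (Real.exp_nonneg _),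
      Real.mul_rpow hcpos.le (Real.exp_nonneg _), ← Real.exp_mul, ← Real.exp_mul]
    have hcc : c ^ α * c ^ (1 - α) = c := by
      rw [← Real.rpow_add hcpos]; simp
    have hee : -(x - m) ^ 2 / (2 * σ ^ 2) * α + -(x - m') ^ 2 / (2 * σ ^ 2) * (1 - α)
        = K + -(x - μ) ^ 2 / (2 * σ ^ 2) := by
      rw [hK, hμ]; field_simp; ring
    calc c ^ α * Real.exp (-(x - m) ^ 2 / (2 * σ ^ 2) * α)
          * (c ^ (1 - α) * Real.exp (-(x - m') ^ 2 / (2 * σ ^ 2) * (1 - α)))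
        = (c ^ α * c ^ (1 - α)) * Real.exp (-(x - m) ^ 2 / (2 * σ ^ 2) * α
            + -(x - m') ^ 2 / (2 * σ ^ 2) * (1 - α)) := by rw [Real.exp_add]; ring
      _ = Real.exp K * (c * Real.exp (-(x - μ) ^ 2 / (2 * σ ^ 2))) := by
          rw [hcc, hee, Real.exp_add]; ring
  simp only [hpt]
  rw [MeasureTheory.integral_const_mul, MeasureTheory.integral_const_mul,
    gauss_int σ μ hσ, hc]
  have : σ * Real.sqrt (2 * π) ≠ 0 := by positivity
  field_simp

/-- Rényi divergence between two Gaussians with common variance: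
`∫ p_m(x)^α p_{m'}(x)^{1−α} dx = exp(α(α−1)(m−m')²/(2σ²))`; hence for `α > 1` the
Rényi divergence of order `α` between `N(m, σ²)` and `N(m', σ²)` equals
`α(m−m')²/(2σ²)`, so the Gaussian mechanism with ℓ₂ sensitivity `1` and noise
`N(0, σ²)` satisfies `(α, α/(2σ²))`-Rényi differential privacy. -/
theorem gaussian_renyi_divergence (σ m m' α : ℝ) (hσ : 0 < σ) :
    (∫ x : ℝ, gaussPdf σ m x ^ α * gaussPdf σ m' x ^ (1 - α))
        = Real.exp (α * (α - 1) * (m - m') ^ 2 / (2 * σ ^ 2)) ∧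
      (1 < α →
        (1 / (α - 1))
            * Real.log (∫ x : ℝ, gaussPdf σ m x ^ α * gaussPdf σ m' x ^ (1 - α))
          = α * (m - m') ^ 2 / (2 * σ ^ 2)) ∧
      (1 < α → |m - m'| ≤ 1 →
        (1 / (α - 1))
            * Real.log (∫ x : ℝ, gaussPdf σ m x ^ α * gaussPdf σ m' x ^ (1 - α))
          ≤ α / (2 * σ ^ 2)) := by
  have h := gauss_renyi_key σ m m' α hσ
  have hlog : ∀ (hα : 1 < α),
      (1 / (α - 1)) * Real.log (∫ x : ℝ, gaussPdf σ m x ^ α * gaussPdf σ m' x ^ (1 - α))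
        = α * (m - m') ^ 2 / (2 * σ ^ 2) := by
    intro hα
    rw [h, Real.log_exp]
    have h1 : α - 1 ≠ 0 := by linarith
    field_simp
  refine ⟨h, hlog, fun hα hmm => ?_⟩
  rw [hlog hα]
  have h2 : (m - m') ^ 2 ≤ 1 := by
    calc (m - m') ^ 2 = |m - m'| ^ 2 := (sq_abs _).symm
      _ ≤ 1 := by nlinarith [abs_nonneg (m - m')]
  have hαpos : 0 < α := by linarith
  have : α * (m - m') ^ 2 ≤ α := by nlinarith
  apply div_le_div_of_nonneg_right this ?_ |>.trans_eq rfl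
  positivity
end

section
/- Let μ and ν be probability measures on a measurable space with μ absolutely continuous with respect to ν, let α > 1, ε_r ≥ 0, and δ_r ∈ (0,1). If ∫ (dμ/dν)(x)^α dν(x) ≤ exp((α−1)·ε_r) (i.e., the Rényi divergence of order α of μ from ν is at most ε_r), then for every measurable set S, μ(S) ≤ exp( ε_r + log(1/δ_r)/(α−1) )·ν(S) + δ_r. -/
open MeasureTheory ENNReal

/-- Conversion from Rényi differential privacy to approximate differential privacy:
if probability measures `μ ≪ ν` satisfy `∫ (dμ/dν)^α dν ≤ exp((α−1)ε_r)` (i.e. the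
order-`α` Rényi divergence of `μ` from `ν` is at most `ε_r`), then for every measurable
set `S`, `μ(S) ≤ exp(ε_r + log(1/δ_r)/(α−1))·ν(S) + δ_r`. -/
theorem rdp_to_dp {Ω : Type*} [MeasurableSpace Ω] (μ ν : Measure Ω)
    [IsProbabilityMeasure μ] [IsProbabilityMeasure ν] (hac : μ ≪ ν)
    (α εr δr : ℝ) (hα : 1 < α) (hεr : 0 ≤ εr) (hδr : δr ∈ Set.Ioo (0 : ℝ) 1)
    (hdiv : ∫⁻ x, (μ.rnDeriv ν x) ^ α ∂ν ≤ ENNReal.ofReal (Real.exp ((α - 1) * εr))) :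
    ∀ S : Set Ω, MeasurableSet S →
      μ S ≤ ENNReal.ofReal (Real.exp (εr + Real.log (1 / δr) / (α - 1))) * ν S
        + ENNReal.ofReal δr := by
  intro S hS
  set f := μ.rnDeriv ν with hf
  have hfm : Measurable f := μ.measurable_rnDeriv ν
  set ε : ℝ := εr + Real.log (1 / δr) / (α - 1) with hεdef
  have hα1 : (0:ℝ) < α - 1 := by linarith
  set c : ℝ≥0∞ := ENNReal.ofReal (Real.exp ε) with hcdef
  have hc0 : c ≠ 0 := by
    simp [hcdef, ENNReal.ofReal_eq_zero, not_le, Real.exp_pos]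
  have hcT : c ≠ ⊤ := ENNReal.ofReal_ne_top
  set A : Set Ω := {x | c < f x} with hAdef
  have hA : MeasurableSet A := measurableSet_lt measurable_const hfm
  have hμS : μ S = ∫⁻ x in S, f x ∂ν := (Measure.setLIntegral_rnDeriv hac S).symm
  have hsplit : ∫⁻ x in S, f x ∂ν
      = ∫⁻ x in S ∩ A, f x ∂ν + ∫⁻ x in S \ A, f x ∂ν :=
    (lintegral_inter_add_diff f S hA).symm
  -- bound on the complement part
  have hcompl : ∫⁻ x in S \ A, f x ∂ν ≤ c * ν S := by
    calc ∫⁻ x in S \ A, f x ∂ν ≤ ∫⁻ _x in S \ A, c ∂ν := by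
          refine setLIntegral_mono' (hS.diff hA) fun x hx => ?_
          exact not_lt.1 hx.2
      _ = c * ν (S \ A) := by simp [mul_comm]
      _ ≤ c * ν S := by
          exact mul_le_mul_right (measure_mono Set.diff_subset) c
  -- bound on the A part
  have hkey : ∀ x ∈ A, c ^ (α - 1) * f x ≤ f x ^ α := by
    intro x hx
    have hxc : c < f x := hx
    by_cases hT : f x = ⊤
    · have : f x ^ α = ⊤ := by
        rw [hT]; exact ENNReal.top_rpow_of_pos (by linarith)
      simp [this]
    · have hx0 : f x ≠ 0 := by
        intro h; rw [h] at hxc; exact (not_lt.2 (zero_le : 0 ≤ c)) hxc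
      have h1 : c ^ (α - 1) * f x ≤ f x ^ (α - 1) * f x :=
        mul_le_mul_left (ENNReal.rpow_le_rpow hxc.le hα1.le) _
      have h2 : f x ^ (α - 1) * f x = f x ^ α := by
        rw [← ENNReal.rpow_one (f x)]
        rw [ENNReal.rpow_one]
        nth_rewrite 2 [show (f x) = f x ^ (1:ℝ) by rw [ENNReal.rpow_one]]
        rw [← ENNReal.rpow_add _ _ hx0 hT]
        norm_num
      rw [h2] at h1; exact h1
  have hcα0 : c ^ (α - 1) ≠ 0 := by
    simp [ENNReal.rpow_eq_zero_iff, hc0, hcT]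
  have hcαT : c ^ (α - 1) ≠ ⊤ := by
    simp [ENNReal.rpow_eq_top_iff, hc0, hcT]
  have hApart : c ^ (α - 1) * ∫⁻ x in S ∩ A, f x ∂ν ≤ ENNReal.ofReal (Real.exp ((α - 1) * εr)) := by
    calc c ^ (α - 1) * ∫⁻ x in S ∩ A, f x ∂ν
        = ∫⁻ x in S ∩ A, c ^ (α - 1) * f x ∂ν := (lintegral_const_mul _ hfm).symm
      _ ≤ ∫⁻ x in S ∩ A, f x ^ α ∂ν := by
          refine setLIntegral_mono' (hS.inter hA) fun x hx => hkey x hx.2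
      _ ≤ ∫⁻ x, f x ^ α ∂ν := setLIntegral_le_lintegral _ _
      _ ≤ ENNReal.ofReal (Real.exp ((α - 1) * εr)) := hdiv
  -- compute c ^ (α-1)
  have hcα : c ^ (α - 1) = ENNReal.ofReal (Real.exp (ε * (α - 1))) := by
    rw [hcdef, ENNReal.ofReal_rpow_of_pos (Real.exp_pos ε),
      Real.rpow_def_of_pos (Real.exp_pos ε), Real.log_exp]
  have hIA : ∫⁻ x in S ∩ A, f x ∂ν ≤ ENNReal.ofReal δr := by
    have hApart' : (∫⁻ x in S ∩ A, f x ∂ν) * c ^ (α - 1)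
        ≤ ENNReal.ofReal (Real.exp ((α - 1) * εr)) := le_of_eq_of_le (mul_comm _ _) hApart
    have h := (ENNReal.le_div_iff_mul_le (Or.inl hcα0) (Or.inl hcαT)).2 hApart'
    refine h.trans ?_
    rw [hcα, ← ENNReal.ofReal_div_of_pos (Real.exp_pos _), ← Real.exp_sub]
    have : (α - 1) * εr - ε * (α - 1) = Real.log δr := by
      rw [hεdef]
      have hδ0 : (0:ℝ) < δr := hδr.1
      have hlog : Real.log (1 / δr) = - Real.log δr := by
        rw [one_div, Real.log_inv]
      field_simp [hlog]
      ring
      rw [Real.log_inv, neg_neg]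
    rw [this, Real.exp_log hδr.1]
  -- combine
  rw [hμS, hsplit]
  calc ∫⁻ x in S ∩ A, f x ∂ν + ∫⁻ x in S \ A, f x ∂ν
      ≤ ENNReal.ofReal δr + c * ν S := add_le_add hIA hcompl
    _ = c * ν S + ENNReal.ofReal δr := add_comm _ _
end

section
/- Let μ₁, μ₂, ν₁, ν₂ be σ-finite measures on measurable spaces, with μ₁ ≪ ν₁ and μ₂ ≪ ν₂, and let α ≥ 0. Then ∫ (d(μ₁ × μ₂)/d(ν₁ × ν₂))(x, y)^α d(ν₁ × ν₂)(x, y) = ( ∫ (dμ₁/dν₁)(x)^α dν₁(x) ) · ( ∫ (dμ₂/dν₂)(y)^α dν₂(y) ); in particular, for probability measures and α > 1, the Rényi divergence of order α of the product measures is additive: D_α(μ₁×μ₂ ‖ ν₁×ν₂) = D_α(μ₁‖ν₁) + D_α(μ₂‖ν₂). -/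
open MeasureTheory ENNReal

lemma prod_eq_withDensity_aux {X Y : Type*} [MeasurableSpace X] [MeasurableSpace Y]
    (μ₁ ν₁ : Measure X) (μ₂ ν₂ : Measure Y)
    [SigmaFinite μ₁] [SigmaFinite ν₁] [SigmaFinite μ₂] [SigmaFinite ν₂]
    (hac₁ : μ₁ ≪ ν₁) (hac₂ : μ₂ ≪ ν₂) :
    μ₁.prod μ₂ = (ν₁.prod ν₂).withDensity
      (fun p => μ₁.rnDeriv ν₁ p.1 * μ₂.rnDeriv ν₂ p.2) := by
  refine Measure.prod_eq fun s t hs ht => ?_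
  rw [withDensity_apply _ (hs.prod ht), ← Measure.prod_restrict s t,
    lintegral_prod_mul ((μ₁.measurable_rnDeriv ν₁).aemeasurable)
      ((μ₂.measurable_rnDeriv ν₂).aemeasurable),
    Measure.setLIntegral_rnDeriv hac₁ s, Measure.setLIntegral_rnDeriv hac₂ t]

lemma ereal_mul_add_of_pos {c : ℝ} (hc : 0 < c) {a b : EReal} (ha : a ≠ ⊥) (hb : b ≠ ⊥) :
    (c : EReal) * (a + b) = (c : EReal) * a + (c : EReal) * b := by
  induction a with
  | bot => exact absurd rfl ha
  | top =>
    rw [EReal.top_add_of_ne_bot hb, EReal.coe_mul_top_of_pos hc,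
      EReal.top_add_of_ne_bot]
    induction b with
    | bot => exact absurd rfl hb
    | top => simp [EReal.coe_mul_top_of_pos hc]
    | coe r => simp [← EReal.coe_mul]
  | coe r =>
    induction b with
    | bot => exact absurd rfl hb
    | top =>
      rw [EReal.add_top_of_ne_bot (by simp), EReal.coe_mul_top_of_pos hc,
        EReal.add_top_of_ne_bot (by simp [← EReal.coe_mul])]
    | coe r' => norm_cast; ring

lemma renyi_aux_ne_zero {Z : Type*} [MeasurableSpace Z] (μ ν : Measure Z) [SigmaFinite ν]
    (hμ : IsProbabilityMeasure μ) (hac : μ ≪ ν) {α : ℝ} (hα : 0 ≤ α) :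
    (∫⁻ z, (μ.rnDeriv ν z) ^ α ∂ν) ≠ 0 := by
  intro h0
  have h1 : ∀ᵐ z ∂ν, (μ.rnDeriv ν z) ^ α = 0 := (lintegral_eq_zero_iff
    ((μ.measurable_rnDeriv ν).pow_const α)).mp h0
  have h2 : ∀ᵐ z ∂ν, μ.rnDeriv ν z = 0 := by
    filter_upwards [h1] with z hz
    by_contra h
    exact h ((ENNReal.rpow_eq_zero_iff.mp hz).elim (fun h => h.1)
    (fun h => absurd h.2 (not_lt.mpr (by linarith))))
  have : μ Set.univ = 0 := by
    rw [← Measure.setLIntegral_rnDeriv hac Set.univ, setLIntegral_univ,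
    lintegral_congr_ae h2, lintegral_zero]
  rw [measure_univ] at this
  exact one_ne_zero this

/-- Composition property of Rényi differential privacy: for σ-finite measures with
`μ₁ ≪ ν₁` and `μ₂ ≪ ν₂` and `α ≥ 0`, the `α`-moment of the Radon–Nikodym derivative of
the product measures factorizes,
`∫ (d(μ₁×μ₂)/d(ν₁×ν₂))^α d(ν₁×ν₂) = (∫ (dμ₁/dν₁)^α dν₁)·(∫ (dμ₂/dν₂)^α dν₂)`;
in particular, for probability measures and `α > 1`, the order-`α` Rényi divergence of
the products is additive: `D_α(μ₁×μ₂‖ν₁×ν₂) = D_α(μ₁‖ν₁) + D_α(μ₂‖ν₂)`. -/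
theorem renyi_divergence_product {X Y : Type*} [MeasurableSpace X] [MeasurableSpace Y]
    (μ₁ ν₁ : Measure X) (μ₂ ν₂ : Measure Y)
    [SigmaFinite μ₁] [SigmaFinite ν₁] [SigmaFinite μ₂] [SigmaFinite ν₂]
    (hac₁ : μ₁ ≪ ν₁) (hac₂ : μ₂ ≪ ν₂) (α : ℝ) (hα : 0 ≤ α) :
    (∫⁻ p : X × Y, ((μ₁.prod μ₂).rnDeriv (ν₁.prod ν₂) p) ^ α ∂(ν₁.prod ν₂))
        = (∫⁻ x, (μ₁.rnDeriv ν₁ x) ^ α ∂ν₁) * (∫⁻ y, (μ₂.rnDeriv ν₂ y) ^ α ∂ν₂) ∧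
      (IsProbabilityMeasure μ₁ → IsProbabilityMeasure ν₁ →
        IsProbabilityMeasure μ₂ → IsProbabilityMeasure ν₂ → 1 < α →
        (((α - 1)⁻¹ : ℝ) : EReal)
            * ENNReal.log (∫⁻ p : X × Y,
                ((μ₁.prod μ₂).rnDeriv (ν₁.prod ν₂) p) ^ α ∂(ν₁.prod ν₂))
          = (((α - 1)⁻¹ : ℝ) : EReal)
              * ENNReal.log (∫⁻ x, (μ₁.rnDeriv ν₁ x) ^ α ∂ν₁)
            + (((α - 1)⁻¹ : ℝ) : EReal)
              * ENNReal.log (∫⁻ y, (μ₂.rnDeriv ν₂ y) ^ α ∂ν₂)) := by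
  have hmeas : Measurable (fun p : X × Y => μ₁.rnDeriv ν₁ p.1 * μ₂.rnDeriv ν₂ p.2) :=
    ((μ₁.measurable_rnDeriv ν₁).comp measurable_fst).mul
      ((μ₂.measurable_rnDeriv ν₂).comp measurable_snd)
  have hkey : (μ₁.prod μ₂).rnDeriv (ν₁.prod ν₂)
      =ᵐ[ν₁.prod ν₂] fun p => μ₁.rnDeriv ν₁ p.1 * μ₂.rnDeriv ν₂ p.2 := by
    rw [prod_eq_withDensity_aux μ₁ ν₁ μ₂ ν₂ hac₁ hac₂]
    exact Measure.rnDeriv_withDensity _ hmeas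
  have hmain : (∫⁻ p : X × Y, ((μ₁.prod μ₂).rnDeriv (ν₁.prod ν₂) p) ^ α ∂(ν₁.prod ν₂))
      = (∫⁻ x, (μ₁.rnDeriv ν₁ x) ^ α ∂ν₁) * (∫⁻ y, (μ₂.rnDeriv ν₂ y) ^ α ∂ν₂) := by
    have h1 : (∫⁻ p : X × Y, ((μ₁.prod μ₂).rnDeriv (ν₁.prod ν₂) p) ^ α ∂(ν₁.prod ν₂))
        = ∫⁻ p : X × Y, (μ₁.rnDeriv ν₁ p.1) ^ α * (μ₂.rnDeriv ν₂ p.2) ^ α ∂(ν₁.prod ν₂) :=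
      lintegral_congr_ae (hkey.mono fun p hp => by
        dsimp only at hp ⊢
        rw [hp, ENNReal.mul_rpow_of_nonneg _ _ hα])
    rw [h1]
    exact lintegral_prod_mul
      (((μ₁.measurable_rnDeriv ν₁).pow_const α).aemeasurable)
      (((μ₂.measurable_rnDeriv ν₂).pow_const α).aemeasurable)
  refine ⟨hmain, fun hp₁ hq₁ hp₂ hq₂ hα1 => ?_⟩
  rw [hmain, ENNReal.log_mul_add]
  have hc : (0 : ℝ) < (α - 1)⁻¹ := by rw [inv_pos]; linarith
  have h₁ := renyi_aux_ne_zero μ₁ ν₁ hp₁ hac₁ hα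
  have h₂ := renyi_aux_ne_zero μ₂ ν₂ hp₂ hac₂ hα
  exact ereal_mul_add_of_pos hc
    (by simp [ENNReal.log_eq_bot_iff, h₁])
    (by simp [ENNReal.log_eq_bot_iff, h₂])
end
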